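/- Let f : ℝ → ℝ be C² with |f'(x)| ≤ B, let p ∈ (1,2), and suppose D^p_f[f''](x) := ∫_ℝ |f''(x)-f''(x-α)|^p/((f(x)-f(x-α))²+α²) dα is finite at x. Then D^p_f[f''](x) ≥ |f''(x)|^{p+1} / (96 B (1 + B²)). -/

import Mathlib

open Real intervalIntegral

lemma convex_abs_rpow {p : ℝ} (hp : 1 ≤ p) : ConvexOn ℝ Set.univ (fun t : ℝ => |t| ^ p) := by
  refine ⟨convex_univ, fun a _ b _ u v hu hv huv => ?_⟩
  simp only [smul_eq_mul]
  calc |u * a + v * b| ^ p ≤ (u * |a| + v * |b|) ^ p := by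
        apply Real.rpow_le_rpow (abs_nonneg _) ?_ (by linarith)
        calc |u * a + v * b| ≤ |u * a| + |v * b| := abs_add_le _ _
          _ = u * |a| + v * |b| := by rw [abs_mul, abs_mul, abs_of_nonneg hu, abs_of_nonneg hv]
    _ ≤ u * |a| ^ p + v * |b| ^ p := by
        have := (convexOn_rpow hp).2 (Set.mem_Ici.2 (abs_nonneg a)) (Set.mem_Ici.2 (abs_nonneg b)) hu hv huv
        simpa using this

lemma tangent_ineq {p : ℝ} (hp : 1 < p) (c a : ℝ) :
    |c| ^ p + p * |c| ^ (p - 2) * c * (a - c) ≤ |a| ^ p := by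
  have hconv := convex_abs_rpow hp.le
  have hder := hasDerivAt_abs_rpow c hp
  rcases lt_trichotomy c a with h | h | h
  · have := hconv.le_slope_of_hasDerivAt (Set.mem_univ c) (Set.mem_univ a) h hder
    rw [slope_def_field] at this
    have hac : 0 < a - c := by linarith
    rw [le_div_iff₀ hac] at this
    nlinarith [this]
  · simp [h]
  · have := hconv.slope_le_of_hasDerivAt (Set.mem_univ a) (Set.mem_univ c) h hder
    rw [slope_def_field] at this
    have hac : 0 < c - a := by linarith
    rw [div_le_iff₀ hac] at this
    nlinarith [this]

lemma ibp_bound (f : ℝ → ℝ) (B x R : ℝ) (hR : 0 < R)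
    (hdf : Differentiable ℝ (deriv f)) (hcont : Continuous (deriv (deriv f)))
    (hf' : ∀ y, |deriv f y| ≤ B) :
    |∫ α in R..(4*R), deriv (deriv f) (x - α) * α ^ (-2:ℤ)| ≤ 2 * B / R ^ 2 := by
  have hR4 : R ≤ 4 * R := by linarith
  have hne : ∀ α ∈ Set.uIcc R (4*R), α ≠ 0 := by
    intro α hα
    rw [Set.uIcc_of_le hR4] at hα
    exact (lt_of_lt_of_le hR hα.1).ne'
  set h : ℝ → ℝ := fun α => deriv f (x - α) * α ^ (-2:ℤ) with hh
  set h' : ℝ → ℝ := fun α =>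
    -(deriv (deriv f) (x - α)) * α ^ (-2:ℤ) + deriv f (x - α) * ((-2) * α ^ (-3:ℤ)) with hh'
  have hder : ∀ α ∈ Set.uIcc R (4*R), HasDerivAt h (h' α) α := by
    intro α hα
    have hα0 := hne α hα
    have h1 : HasDerivAt (fun α : ℝ => deriv f (x - α)) (deriv (deriv f) (x - α) * (-1)) α := by
      exact (hdf (x - α)).hasDerivAt.comp α ((hasDerivAt_id α).const_sub x)
    have h2 : HasDerivAt (fun α : ℝ => α ^ (-2:ℤ)) (((-2:ℤ):ℝ) * α ^ (-2 - 1 : ℤ)) α :=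
      hasDerivAt_zpow (-2) α (Or.inl hα0)
    have := h1.mul h2
    refine this.congr_deriv ?_
    push_cast [hh']
    ring_nf
  have hz2 : ContinuousOn (fun α : ℝ => α ^ (-2:ℤ)) (Set.uIcc R (4*R)) :=
    continuousOn_id.zpow₀ (-2) (fun α hα => Or.inl (hne α hα))
  have hz3 : ContinuousOn (fun α : ℝ => α ^ (-3:ℤ)) (Set.uIcc R (4*R)) :=
    continuousOn_id.zpow₀ (-3) (fun α hα => Or.inl (hne α hα))
  have hf'c : Continuous (fun α : ℝ => deriv f (x - α)) :=
    hdf.continuous.comp (continuous_const.sub continuous_id)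
  have hf''c : Continuous (fun α : ℝ => deriv (deriv f) (x - α)) :=
    hcont.comp (continuous_const.sub continuous_id)
  have hcont' : ContinuousOn h' (Set.uIcc R (4*R)) :=
    (hf''c.continuousOn.neg.mul hz2).add
      (hf'c.continuousOn.mul (continuousOn_const.mul hz3))
  have hint' : IntervalIntegrable h' MeasureTheory.volume R (4*R) :=
    hcont'.intervalIntegrable
  have hftc : ∫ α in R..(4*R), h' α = h (4*R) - h R :=
    integral_eq_sub_of_hasDerivAt hder hint'
  have h0ni : (0:ℝ) ∉ Set.uIcc R (4*R) := fun h0 => (hne 0 h0) rfl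
  set J : ℝ := ∫ α in R..(4*R), 2 * deriv f (x - α) * α ^ (-3:ℤ) with hJ
  have hJint : IntervalIntegrable (fun α : ℝ => 2 * deriv f (x - α) * α ^ (-3:ℤ))
      MeasureTheory.volume R (4*R) :=
    ((continuous_const.mul hf'c).continuousOn.mul hz3).intervalIntegrable
  have hsplit : (∫ α in R..(4*R), deriv (deriv f) (x - α) * α ^ (-2:ℤ))
      = -(h (4*R) - h R) - J := by
    calc (∫ α in R..(4*R), deriv (deriv f) (x - α) * α ^ (-2:ℤ))
        = ∫ α in R..(4*R), (-(h' α) - 2 * deriv f (x - α) * α ^ (-3:ℤ)) := by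
          apply integral_congr
          intro α hα
          simp only [hh']
          ring
      _ = (∫ α in R..(4*R), -(h' α)) - J := integral_sub hint'.neg hJint
      _ = -(h (4*R) - h R) - J := by rw [integral_neg, hftc]
  have hJbound : |J| ≤ 15 * B / (16 * R ^ 2) := by
    have h1 : |J| ≤ ∫ α in R..(4*R), |2 * deriv f (x - α) * α ^ (-3:ℤ)| :=
      abs_integral_le_integral_abs hR4
    have h2 : (∫ α in R..(4*R), |2 * deriv f (x - α) * α ^ (-3:ℤ)|)
        ≤ ∫ α in R..(4*R), 2 * B * α ^ (-3:ℤ) := by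
      apply integral_mono_on hR4 (hJint.abs) ?_ ?_
      · exact ((continuous_const.mul continuous_const).continuousOn.mul hz3).intervalIntegrable
      · intro α hα
        have hα0 : 0 < α := lt_of_lt_of_le hR hα.1
        rw [abs_mul, abs_mul, abs_two, abs_of_pos (zpow_pos hα0 (-3:ℤ))]
        gcongr
        · exact hf' _
    have h3 : (∫ α in R..(4*R), 2 * B * α ^ (-3:ℤ)) = 15 * B / (16 * R ^ 2) := by
      rw [integral_const_mul, integral_zpow (Or.inr ⟨by norm_num, h0ni⟩)]
      have e4 : ((4:ℝ)*R) ^ (-3 + 1:ℤ) = 1 / (16 * R^2) := by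
        rw [show (-3 + 1 : ℤ) = -2 by norm_num, zpow_neg, zpow_two]
        rw [eq_div_iff (by positivity)]
        rw [inv_mul_eq_div, div_eq_one_iff_eq (by positivity)]
        ring
      have e5 : R ^ (-3 + 1:ℤ) = 1 / R^2 := by
        rw [show (-3 + 1 : ℤ) = -2 by norm_num, zpow_neg, zpow_two, one_div, sq]
      rw [e4, e5]
      push_cast
      field_simp
      ring
    linarith
  have hhb : ∀ α, 0 < α → |h α| ≤ B / α ^ 2 := by
    intro α hα
    have : |h α| = |deriv f (x - α)| * α ^ (-2:ℤ) := by
      simp only [hh, abs_mul, abs_of_pos (zpow_pos hα (-2:ℤ))]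
    rw [this, zpow_neg, ← div_eq_mul_inv, zpow_two, sq]
    gcongr
    · exact hf' _
  have e1 : |h (4*R)| ≤ B / (16 * R^2) := by
    have := hhb (4*R) (by linarith)
    rwa [show (4*R)^2 = 16*R^2 by ring] at this
  have e2 : |h R| ≤ B / R^2 := hhb R hR
  have hBnn : 0 ≤ B := le_trans (abs_nonneg _) (hf' x)
  rw [hsplit, abs_le]
  obtain ⟨a1, a2⟩ := abs_le.1 e1
  obtain ⟨b1, b2⟩ := abs_le.1 e2
  obtain ⟨c1, c2⟩ := abs_le.1 hJbound
  have key : B / (16 * R^2) + B / R^2 + 15 * B / (16 * R^2) = 2 * B / R^2 := by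
    field_simp
    ring
  constructor <;> nlinarith [sq_nonneg R]

open MeasureTheory

theorem stmt_9 (f : ℝ → ℝ) (B p : ℝ) (hB : 0 < B)
    (hp1 : 1 < p) (hp2 : p < 2)
    (hf : ContDiff ℝ 2 f)
    (hf' : ∀ x, |deriv f x| ≤ B)
    (x : ℝ)
    (hD : (∫⁻ α : ℝ, ENNReal.ofReal
        (|deriv (deriv f) x - deriv (deriv f) (x - α)| ^ p /
          ((f x - f (x - α))^2 + α^2))) < ⊤) :
    ENNReal.ofReal (|deriv (deriv f) x| ^ (p + 1) / (96 * B * (1 + B^2))) ≤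
      ∫⁻ α : ℝ, ENNReal.ofReal
        (|deriv (deriv f) x - deriv (deriv f) (x - α)| ^ p /
          ((f x - f (x - α))^2 + α^2)) := by
  set c := deriv (deriv f) x with hcdef
  by_cases hc0 : c = 0
  · rw [hc0]
    simp [Real.zero_rpow (show p + 1 ≠ 0 by positivity)]
  -- setup
  have hm : 0 < |c| := abs_pos.2 hc0
  set m := |c| with hmdef
  set R := 48 * B / m with hRdef
  have hR : 0 < R := by positivity
  have hR4 : R ≤ 4 * R := by linarith
  have h1 : ContDiff ℝ 1 (deriv f) := by
    have h2 : ContDiff ℝ (1 + 1 : ℕ) f := by exact_mod_cast hf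
    exact (contDiff_succ_iff_deriv.mp (by exact_mod_cast h2)).2.2
  have hdf : Differentiable ℝ (deriv f) := h1.differentiable one_ne_zero
  have hf''c : Continuous (deriv (deriv f)) := h1.continuous_deriv le_rfl
  have hfd : Differentiable ℝ f := hf.differentiable (by norm_num)
  set K := p * m ^ (p - 2) * c with hKdef
  set g : ℝ → ℝ := fun α => (m ^ p - K * deriv (deriv f) (x - α)) / ((1 + B ^ 2) * α ^ 2)
    with hgdef
  -- pointwise inequality, valid for ALL α
  have hpt : ∀ α : ℝ, g α ≤
      |c - deriv (deriv f) (x - α)| ^ p / ((f x - f (x - α)) ^ 2 + α ^ 2) := by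
    intro α
    have hrhs : 0 ≤ |c - deriv (deriv f) (x - α)| ^ p / ((f x - f (x - α)) ^ 2 + α ^ 2) := by
      positivity
    by_cases hα : α = 0
    · subst hα
      simp only [hgdef]
      norm_num
    · -- MVT bound
      have hmvt : |f x - f (x - α)| ≤ B * |α| := by
        have := convex_univ.norm_image_sub_le_of_norm_deriv_le
          (fun y _ => hfd y) (fun y _ => hf' y) (Set.mem_univ (x - α)) (Set.mem_univ x)
        simpa using this
      have hden : (f x - f (x - α)) ^ 2 + α ^ 2 ≤ (1 + B ^ 2) * α ^ 2 := by
        have h2 : (f x - f (x - α)) ^ 2 ≤ B ^ 2 * α ^ 2 := by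
          have h3 := pow_le_pow_left₀ (abs_nonneg (f x - f (x - α))) hmvt 2
          rw [mul_pow, sq_abs, sq_abs] at h3
          exact h3
        linarith
      have hdpos : 0 < (f x - f (x - α)) ^ 2 + α ^ 2 := by positivity
      have htan : m ^ p - K * deriv (deriv f) (x - α) ≤ |c - deriv (deriv f) (x - α)| ^ p := by
        have := tangent_ineq hp1 c (c - deriv (deriv f) (x - α))
        simp only [hKdef, hmdef]
        nlinarith [this]
      exact div_le_div₀ (by positivity) htan hdpos hden
  -- the real integral lower bound
  have hcont_num : Continuous (fun α : ℝ => m ^ p - K * deriv (deriv f) (x - α)) :=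
    continuous_const.sub (continuous_const.mul
      (hf''c.comp (continuous_const.sub continuous_id)))
  have hgcont : ContinuousOn g (Set.uIcc R (4 * R)) := by
    apply ContinuousOn.div hcont_num.continuousOn
      (continuous_const.mul (continuous_pow 2)).continuousOn
    intro α hα
    rw [Set.uIcc_of_le hR4] at hα
    have : 0 < α := lt_of_lt_of_le hR hα.1
    exact (by positivity : (1 + B ^ 2) * α ^ 2 ≠ 0)
  have hIoc : Set.Ioc R (4 * R) ⊆ Set.uIcc R (4 * R) := by
    rw [Set.uIcc_of_le hR4]; exact Set.Ioc_subset_Icc_self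
  have hgint : IntegrableOn g (Set.Ioc R (4 * R)) volume := by
    apply (hgcont.integrableOn_compact ?_).mono_set hIoc
    rw [Set.uIcc_of_le hR4]; exact isCompact_Icc
  have hmain : m ^ (p + 1) / (96 * B * (1 + B ^ 2)) ≤ ∫ α in Set.Ioc R (4 * R), g α := by
    rw [← intervalIntegral.integral_of_le hR4]
    have hne : ∀ α ∈ Set.uIcc R (4 * R), α ≠ 0 := by
      intro α hα
      rw [Set.uIcc_of_le hR4] at hα
      exact (lt_of_lt_of_le hR hα.1).ne'
    have h0ni : (0:ℝ) ∉ Set.uIcc R (4 * R) := fun h0 => (hne 0 h0) rfl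
    have hz2 : ContinuousOn (fun α : ℝ => α ^ (-2:ℤ)) (Set.uIcc R (4 * R)) :=
      continuousOn_id.zpow₀ (-2) (fun α hα => Or.inl (hne α hα))
    set I₁ : ℝ := ∫ α in R..(4*R), α ^ (-2:ℤ) with hI1def
    set I₂ : ℝ := ∫ α in R..(4*R), deriv (deriv f) (x - α) * α ^ (-2:ℤ) with hI2def
    have hI1 : I₁ = 3 / (4 * R) := by
      rw [hI1def, integral_zpow (Or.inr ⟨by norm_num, h0ni⟩)]
      push_cast
      rw [show (-2:ℝ) + 1 = -1 by norm_num]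
      rw [show ((4:ℝ)*R) ^ (-1:ℤ) = (4*R)⁻¹ from zpow_neg_one _,
        show R ^ (-1:ℤ) = R⁻¹ from zpow_neg_one _]
      field_simp
      ring
    have hI2 : |I₂| ≤ 2 * B / R ^ 2 := ibp_bound f B x R hR hdf hf''c hf'
    have heq : (∫ α in R..(4*R), g α) = (m ^ p * I₁ - K * I₂) / (1 + B ^ 2) := by
      have hcg : ∀ α ∈ Set.uIcc R (4 * R), g α =
          (m ^ p * α ^ (-2:ℤ) - K * (deriv (deriv f) (x - α) * α ^ (-2:ℤ))) / (1 + B ^ 2) := by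
        intro α hα
        have hα0 := hne α hα
        have hz : (α:ℝ) ^ (-2:ℤ) = (α ^ 2)⁻¹ := by
          rw [zpow_neg]
          norm_cast
        simp only [hgdef, hz]
        rw [show m ^ p * (α ^ 2)⁻¹ - K * (deriv (deriv f) (x - α) * (α ^ 2)⁻¹)
            = (m ^ p - K * deriv (deriv f) (x - α)) * (α ^ 2)⁻¹ by ring,
          ← div_eq_mul_inv, div_div, mul_comm (α ^ 2) (1 + B ^ 2)]
      have hint1 : IntervalIntegrable (fun α : ℝ => m ^ p * α ^ (-2:ℤ)) volume R (4*R) :=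
        (continuousOn_const.mul hz2).intervalIntegrable
      have hint2 : IntervalIntegrable
          (fun α : ℝ => K * (deriv (deriv f) (x - α) * α ^ (-2:ℤ))) volume R (4*R) :=
        (continuousOn_const.mul (((hf''c.comp
          (continuous_const.sub continuous_id)).continuousOn).mul hz2)).intervalIntegrable
      rw [integral_congr hcg, intervalIntegral.integral_div,
        intervalIntegral.integral_sub hint1 hint2, intervalIntegral.integral_const_mul,
        intervalIntegral.integral_const_mul]
    rw [heq, hI1]
    have hA : 0 < m ^ (p - 1) := Real.rpow_pos_of_pos hm _
    set A : ℝ := m ^ (p - 1) with hAdef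
    have hmp : m ^ p = A * m := by
      have h := Real.rpow_add hm (p - 1) 1
      rw [Real.rpow_one] at h
      rw [hAdef, ← h]
      norm_num
    have hmp1 : m ^ (p + 1) = A * m ^ 2 := by
      have h := Real.rpow_add hm (p - 1) 2
      rw [Real.rpow_two] at h
      rw [hAdef, ← h]
      congr 1
      ring
    have hKabs : |K| ≤ 2 * A := by
      have hA2 : A = m ^ (p - 2) * m := by
        have h := Real.rpow_add hm (p - 2) 1
        rw [Real.rpow_one] at h
        rw [hAdef, ← h]
        congr 1
        ring
      have : |K| = p * A := by
        rw [hKdef, abs_mul, abs_mul, abs_of_pos (by linarith : (0:ℝ) < p),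
          abs_of_pos (Real.rpow_pos_of_pos hm _), ← hmdef, hA2]
        ring
      rw [this]
      nlinarith
    have hKI2 : K * I₂ ≤ 2 * A * (2 * B / R ^ 2) := by
      calc K * I₂ ≤ |K * I₂| := le_abs_self _
        _ = |K| * |I₂| := abs_mul _ _
        _ ≤ (2 * A) * (2 * B / R ^ 2) := by
            apply mul_le_mul hKabs hI2 (abs_nonneg _)
            positivity
    have e3 : (3:ℝ) / (4 * R) = m / (64 * B) := by
      rw [hRdef]
      field_simp
      ring
    have e4 : 2 * B / R ^ 2 = m ^ 2 / (1152 * B) := by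
      rw [hRdef]
      field_simp
      ring
    rw [hmp1, hmp, e3]
    rw [e4] at hKI2
    have e5 : A * m * (m / (64 * B)) - 2 * A * (m ^ 2 / (1152 * B)) = A * m ^ 2 / (72 * B) := by
      field_simp
      ring
    have hfinal : A * m ^ 2 / (96 * B * (1 + B ^ 2)) ≤
        (A * m * (m / (64 * B)) - 2 * A * (m ^ 2 / (1152 * B))) / (1 + B ^ 2) := by
      rw [e5, div_div]
      gcongr
      nlinarith [sq_nonneg B]
    refine le_trans hfinal ?_
    gcongr
  -- ENNReal chain
  set g' : ℝ → ℝ := fun α => max (g α) 0 with hg'def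
  have hg'int : IntegrableOn g' (Set.Ioc R (4 * R)) volume := hgint.pos_part
  calc ENNReal.ofReal (m ^ (p + 1) / (96 * B * (1 + B ^ 2)))
      ≤ ENNReal.ofReal (∫ α in Set.Ioc R (4 * R), g' α) := by
        apply ENNReal.ofReal_le_ofReal
        refine le_trans hmain (integral_mono hgint hg'int ?_)
        intro α; exact le_max_left _ _
    _ = ∫⁻ α in Set.Ioc R (4 * R), ENNReal.ofReal (g' α) := by
        apply ofReal_integral_eq_lintegral_ofReal hg'int
        exact Filter.Eventually.of_forall (fun α => le_max_right _ _)
    _ ≤ ∫⁻ α in Set.Ioc R (4 * R), ENNReal.ofReal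
          (|c - deriv (deriv f) (x - α)| ^ p / ((f x - f (x - α)) ^ 2 + α ^ 2)) := by
        apply lintegral_mono
        intro α
        apply ENNReal.ofReal_le_ofReal
        exact max_le (hpt α) (by positivity)
    _ ≤ ∫⁻ α : ℝ, ENNReal.ofReal
          (|c - deriv (deriv f) (x - α)| ^ p / ((f x - f (x - α)) ^ 2 + α ^ 2)) :=
        setLIntegral_le_lintegral _ _
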